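/- The Delta measure TS(G, u, v) = Σ over events P of G with u, v ∈ P of 1/C(|P|,2) satisfies: (a) baseline: TS(∅, u, v) = 0 and TS({{u,v}}, u, v) = 1; (b) frequency: TS(G + {P}, u, v) ≥ TS(G, u, v) whenever u, v ∈ P; (c) intimacy: TS({P \ {w}}, u, v) ≥ TS({P}, u, v) for w ∈ P, w ∉ {u,v}; (d) larger events create more ties: for any events P, Q, the total tie strength created by P alone equals 1 and hence Σ over unordered pairs in P of TS({P}) ≥ Σ over unordered pairs in Q of TS({Q}); (e) conditional independence of vertices: TS(G, u, v) depends only on the events of G containing both u and v; (f) additivity, hence submodularity: TS(G + {Q}, u, v) = TS(G, u, v) + TS({Q}, u, v). -/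

import Mathlib

/-- The Delta measure: `TS G u v = Σ_{P ∈ G, u,v ∈ P} 1 / C(|P|,2)` with
`C(n,2) = n(n-1)/2`. -/
noncomputable def TSdelta {V : Type*} [DecidableEq V]
    (G : Multiset (Finset V)) (u v : V) : ℝ :=
  ((G.filter fun P => u ∈ P ∧ v ∈ P).map
    fun P => 1 / ((P.card : ℝ) * ((P.card : ℝ) - 1) / 2)).sum

lemma card_mul_nonneg {V : Type*} [DecidableEq V] (P : Finset V) :
    0 ≤ (P.card : ℝ) * ((P.card : ℝ) - 1) := by
  rcases Nat.eq_zero_or_pos P.card with h | h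
  · simp [h]
  · have : (1:ℝ) ≤ P.card := by exact_mod_cast h
    nlinarith

lemma term_nonneg {V : Type*} [DecidableEq V] (P : Finset V) :
    0 ≤ 1 / ((P.card : ℝ) * ((P.card : ℝ) - 1) / 2) := by
  rw [one_div_nonneg]
  exact div_nonneg (card_mul_nonneg P) (by norm_num)

lemma TS_single {V : Type*} [DecidableEq V] (P : Finset V) (u v : V) :
    TSdelta {P} u v = if u ∈ P ∧ v ∈ P then 1 / ((P.card : ℝ) * ((P.card : ℝ) - 1) / 2) else 0 := by
  simp [TSdelta, Multiset.filter_singleton]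
  split <;> simp

lemma TS_nonneg {V : Type*} [DecidableEq V] (G : Multiset (Finset V)) (u v : V) :
    0 ≤ TSdelta G u v := by
  apply Multiset.sum_nonneg
  intro x hx
  obtain ⟨P, _, rfl⟩ := Multiset.mem_map.mp hx
  exact term_nonneg P

lemma TS_cons {V : Type*} [DecidableEq V] (G : Multiset (Finset V)) (Q : Finset V) (u v : V) :
    TSdelta (Q ::ₘ G) u v = TSdelta G u v + TSdelta {Q} u v := by
  simp [TSdelta, Multiset.filter_cons, Multiset.filter_singleton]
  split <;> simp [add_comm]

lemma sum_offDiag_TS {V : Type*} [DecidableEq V] (P : Finset V) (h : 2 ≤ P.card) :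
    (∑ p ∈ P.offDiag, TSdelta {P} p.1 p.2) / 2 = 1 := by
  have hn : (2:ℝ) ≤ P.card := by exact_mod_cast h
  have hpos : 0 < (P.card : ℝ) * ((P.card : ℝ) - 1) := by nlinarith
  have : ∀ p ∈ P.offDiag, TSdelta {P} p.1 p.2
      = 1 / ((P.card : ℝ) * ((P.card : ℝ) - 1) / 2) := by
    intro p hp
    rw [Finset.mem_offDiag] at hp
    rw [TS_single, if_pos ⟨hp.1, hp.2.1⟩]
  rw [Finset.sum_congr rfl this, Finset.sum_const, Finset.offDiag_card, nsmul_eq_mul,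
    Nat.cast_sub (by nlinarith : P.card ≤ P.card * P.card)]
  push_cast
  have hne1 : (P.card : ℝ) - 1 ≠ 0 := by linarith
  have hne0 : (P.card : ℝ) ≠ 0 := by linarith
  field_simp

/-- The Delta measure satisfies: (a) the baseline, (b) the frequency axiom,
(c) the intimacy axiom, (d) larger events create more ties (the total tie
strength of a single event with at least two attendees, formalized as half the
sum over ordered pairs of distinct attendees, equals 1, and hence is monotone
in the event size), (e) conditional independence of vertices (it depends only
on the events containing both people), and (f) additivity, hence
submodularity. -/
theorem delta_satisfies_axioms {V : Type*} [DecidableEq V] :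
    (∀ u v : V, u ≠ v → TSdelta (0 : Multiset (Finset V)) u v = 0) ∧
    (∀ u v : V, u ≠ v → TSdelta {({u, v} : Finset V)} u v = 1) ∧
    (∀ (G : Multiset (Finset V)) (P : Finset V) (u v : V), u ≠ v →
      u ∈ P → v ∈ P → TSdelta G u v ≤ TSdelta (P ::ₘ G) u v) ∧
    (∀ (P : Finset V) (u v w : V), u ≠ v → u ∈ P → v ∈ P → w ∈ P →
      w ≠ u → w ≠ v → TSdelta {P} u v ≤ TSdelta {P.erase w} u v) ∧
    (∀ P : Finset V, 2 ≤ P.card →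
      (∑ p ∈ P.offDiag, TSdelta {P} p.1 p.2) / 2 = 1) ∧
    (∀ P Q : Finset V, Q.card ≤ P.card →
      (∑ p ∈ Q.offDiag, TSdelta {Q} p.1 p.2) / 2 ≤
        (∑ p ∈ P.offDiag, TSdelta {P} p.1 p.2) / 2) ∧
    (∀ (G : Multiset (Finset V)) (u v : V), u ≠ v →
      TSdelta G u v = TSdelta (G.filter fun P => u ∈ P ∧ v ∈ P) u v) ∧
    (∀ (G : Multiset (Finset V)) (Q : Finset V) (u v : V), u ≠ v →
      TSdelta (Q ::ₘ G) u v = TSdelta G u v + TSdelta {Q} u v) := by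
  refine ⟨?_, ?_, ?_, ?_, sum_offDiag_TS, ?_, ?_, fun G Q u v _ => TS_cons G Q u v⟩
  · intro u v _; simp [TSdelta]
  · intro u v huv
    rw [TS_single, if_pos ⟨by simp, by simp⟩, Finset.card_pair huv]
    norm_num
  · intro G P u v _ hu hv
    rw [TS_cons]
    exact le_add_of_nonneg_right (TS_nonneg _ _ _)
  · intro P u v w huv hu hv hw hwu hwv
    have hu' : u ∈ P.erase w := Finset.mem_erase.mpr ⟨fun h => hwu h.symm, hu⟩
    have hv' : v ∈ P.erase w := Finset.mem_erase.mpr ⟨fun h => hwv h.symm, hv⟩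
    rw [TS_single, TS_single, if_pos ⟨hu, hv⟩, if_pos ⟨hu', hv'⟩,
      Finset.card_erase_of_mem hw]
    have h3 : 3 ≤ P.card := by
      have : ({u, v, w} : Finset V) ⊆ P := by
        intro x hx; simp at hx; rcases hx with rfl | rfl | rfl <;> assumption
      calc 3 = ({u, v, w} : Finset V).card := by
              rw [Finset.card_insert_of_notMem (by simp [huv, hwu.symm]),
                Finset.card_insert_of_notMem (by simp [hwv.symm])]
              simp
        _ ≤ P.card := Finset.card_le_card this
    have hn : (3:ℝ) ≤ P.card := by exact_mod_cast h3
    have h1 : (1:ℕ) ≤ P.card := by omega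
    rw [Nat.cast_sub h1]
    push_cast
    apply one_div_le_one_div_of_le
    · nlinarith
    · nlinarith
  · intro P Q hPQ
    by_cases hQ : 2 ≤ Q.card
    · rw [sum_offDiag_TS Q hQ, sum_offDiag_TS P (hQ.trans hPQ)]
    · have : Q.offDiag = ∅ := by
        rw [← Finset.card_eq_zero, Finset.offDiag_card]
        have : Q.card = 0 ∨ Q.card = 1 := by omega
        rcases this with h | h <;> simp [h]
      rw [this, Finset.sum_empty]
      have : 0 ≤ ∑ p ∈ P.offDiag, TSdelta {P} p.1 p.2 :=
        Finset.sum_nonneg fun p _ => TS_nonneg _ _ _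
      linarith
  · intro G u v _
    unfold TSdelta
    rw [Multiset.filter_filter]
    simp
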